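/- Let H ≻ 0 be symmetric with 0 ⪯ H_w ⪯ H, λ > 0, H_λ = H + λI, σ_max the largest eigenvalue of H, and g ∈ ℝ^d. Define D = (I − H_λ^{-1/2} H_w H_λ^{-1/2})^{-1} − I and Λ = ½ H_λ^{1/2}(H_λ − H_w)^{-1} H_w (H_λ − H_w)^{-1} H_λ^{1/2}. Then 0 ≤ gᵀ H_λ^{-1/2}(D + Λ)H_λ^{-1/2} g ≤ (3σ_max/(2λ) + σ_max²/(2λ²)) · gᵀ H_λ^{-1} g. -/

import Mathlib

open Matrix

section
open scoped ComplexOrder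

/-- The positive semidefinite square root, as defined in Mathlib (Dec 2024), since removed. -/
noncomputable def Matrix.PosSemidef.sqrt {n 𝕜 : Type*} [Fintype n] [DecidableEq n] [RCLike 𝕜]
    {A : Matrix n n 𝕜} (hA : A.PosSemidef) : Matrix n n 𝕜 :=
  hA.1.eigenvectorUnitary.1 * diagonal ((↑) ∘ (√·) ∘ hA.1.eigenvalues) *
  (star hA.1.eigenvectorUnitary : Matrix n n 𝕜)

end

lemma Matrix.PosSemidef.posSemidef_sqrt {n : Type*} [Fintype n] [DecidableEq n]
    {A : Matrix n n ℝ} (hA : A.PosSemidef) : hA.sqrt.PosSemidef := by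
  unfold Matrix.PosSemidef.sqrt
  exact (posSemidef_diagonal_iff.mpr fun i => by simpa using Real.sqrt_nonneg _).mul_mul_conjTranspose_same _

lemma Matrix.PosSemidef.sqrt_mul_self {n : Type*} [Fintype n] [DecidableEq n]
    {A : Matrix n n ℝ} (hA : A.PosSemidef) : hA.sqrt * hA.sqrt = A := by
  have hU : (star hA.1.eigenvectorUnitary : Matrix n n ℝ) * (hA.1.eigenvectorUnitary : Matrix n n ℝ)
      = 1 := (Matrix.mem_unitaryGroup_iff').mp hA.1.eigenvectorUnitary.2
  conv_rhs => rw [hA.1.spectral_theorem, Unitary.conjStarAlgAut_apply]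
  unfold Matrix.PosSemidef.sqrt
  rw [show ∀ a b c d e f : Matrix n n ℝ, a * b * c * (d * e * f) = a * (b * ((c * d) * e)) * f from by
    intros; simp only [Matrix.mul_assoc]]
  rw [hU, Matrix.one_mul, diagonal_mul_diagonal]
  congr 1; congr 1; congr 1
  funext i
  simp [Real.mul_self_sqrt (hA.eigenvalues_nonneg i)]

section Aux

variable {n : Type*} [Fintype n] [DecidableEq n]

omit [DecidableEq n] in
lemma psd_smul {A : Matrix n n ℝ} (hA : A.PosSemidef) {c : ℝ} (hc : 0 ≤ c) :
    (c • A).PosSemidef := by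
  refine .of_dotProduct_mulVec_nonneg ?_ fun x => ?_
  · unfold Matrix.IsHermitian
    rw [conjTranspose_smul, hA.1.eq]
    simp
  · rw [smul_mulVec, dotProduct_smul, smul_eq_mul]
    exact mul_nonneg hc (hA.dotProduct_mulVec_nonneg x)

lemma posDef_conj {A B : Matrix n n ℝ} (hA : A.PosDef) (hB : IsUnit B.det) :
    (Bᴴ * A * B).PosDef := by
  refine .of_dotProduct_mulVec_pos (isHermitian_conjTranspose_mul_mul B hA.1) fun x hx => ?_
  have hBx : B *ᵥ x ≠ 0 := by
    intro h
    apply hx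
    have hinj := Matrix.mulVec_injective_iff_isUnit.mpr ((isUnit_iff_isUnit_det B).mpr hB)
    exact hinj (show B *ᵥ x = B *ᵥ 0 by simp [h])
  simpa only [star_mulVec, dotProduct_mulVec, vecMul_vecMul] using hA.dotProduct_mulVec_pos hBx

lemma loewner_le {A : Matrix n n ℝ} (hA : A.IsHermitian) {σ : ℝ}
    (hσ : ∀ μ ∈ spectrum ℝ A, μ ≤ σ) :
    (σ • (1 : Matrix n n ℝ) - A).PosSemidef := by
  have hU : (hA.eigenvectorUnitary : Matrix n n ℝ) * (star hA.eigenvectorUnitary : Matrix n n ℝ)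
      = 1 := (Matrix.mem_unitaryGroup_iff).mp hA.eigenvectorUnitary.2
  have hdiag : diagonal (fun i => σ - hA.eigenvalues i)
      = σ • (1 : Matrix n n ℝ) - diagonal (RCLike.ofReal ∘ hA.eigenvalues) := by
    ext i j
    rcases eq_or_ne i j with rfl | h
    · simp [Matrix.one_apply]
    · simp [diagonal_apply_ne _ h, Matrix.one_apply_ne h]
  have key : σ • (1 : Matrix n n ℝ) - A =
      (hA.eigenvectorUnitary : Matrix n n ℝ) *
        diagonal (fun i => σ - hA.eigenvalues i) *
        (star hA.eigenvectorUnitary : Matrix n n ℝ) := by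
    conv_lhs => rw [hA.spectral_theorem, Unitary.conjStarAlgAut_apply]
    rw [hdiag, Matrix.mul_sub, Matrix.sub_mul, Matrix.mul_smul, Matrix.mul_one,
      Matrix.smul_mul, hU]
  rw [key]
  have hd : (diagonal (fun i => σ - hA.eigenvalues i) : Matrix n n ℝ).PosSemidef :=
    posSemidef_diagonal_iff.mpr fun i =>
      sub_nonneg.2 (hσ _ (hA.eigenvalues_mem_spectrum_real i))
  exact hd.mul_mul_conjTranspose_same (hA.eigenvectorUnitary : Matrix n n ℝ)

end Aux

/-- Self-loss quadratic-form bound: with `0 ⪯ H_w ⪯ H`, `λ > 0`, `H_λ = H + λI`, `σ_max`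
the largest eigenvalue of `H`, `D = (I − H_λ⁻¹ᐟ² H_w H_λ⁻¹ᐟ²)⁻¹ − I` and
`Λ = ½ H_λ¹ᐟ² (H_λ − H_w)⁻¹ H_w (H_λ − H_w)⁻¹ H_λ¹ᐟ²`, we have
`0 ≤ gᵀ H_λ⁻¹ᐟ² (D + Λ) H_λ⁻¹ᐟ² g ≤ (3σ_max/(2λ) + σ_max²/(2λ²)) gᵀ H_λ⁻¹ g`. -/
theorem stmt12 (d : ℕ) (H Hw : Matrix (Fin d) (Fin d) ℝ) (l σmax : ℝ) (g : Fin d → ℝ)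
    (hH : H.PosSemidef) (hHw : Hw.PosSemidef) (hle : (H - Hw).PosSemidef)
    (hl : 0 < l)
    (hP : (H + l • (1 : Matrix (Fin d) (Fin d) ℝ)).PosSemidef)
    (hσ_mem : σmax ∈ spectrum ℝ H) (hσ_max : ∀ μ ∈ spectrum ℝ H, μ ≤ σmax) :
    0 ≤ g ⬝ᵥ ((hP.sqrt⁻¹ *
          (((1 - hP.sqrt⁻¹ * Hw * hP.sqrt⁻¹)⁻¹ - 1)
            + (1 / 2 : ℝ) • (hP.sqrt *
                ((H + l • (1 : Matrix (Fin d) (Fin d) ℝ)) - Hw)⁻¹ * Hw *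
                ((H + l • (1 : Matrix (Fin d) (Fin d) ℝ)) - Hw)⁻¹ * hP.sqrt))
          * hP.sqrt⁻¹) *ᵥ g) ∧
    g ⬝ᵥ ((hP.sqrt⁻¹ *
          (((1 - hP.sqrt⁻¹ * Hw * hP.sqrt⁻¹)⁻¹ - 1)
            + (1 / 2 : ℝ) • (hP.sqrt *
                ((H + l • (1 : Matrix (Fin d) (Fin d) ℝ)) - Hw)⁻¹ * Hw *
                ((H + l • (1 : Matrix (Fin d) (Fin d) ℝ)) - Hw)⁻¹ * hP.sqrt))
          * hP.sqrt⁻¹) *ᵥ g)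
      ≤ (3 * σmax / (2 * l) + σmax ^ 2 / (2 * l ^ 2)) *
          (g ⬝ᵥ ((H + l • (1 : Matrix (Fin d) (Fin d) ℝ))⁻¹ *ᵥ g)) := by
  classical
  set Hl : Matrix (Fin d) (Fin d) ℝ := H + l • 1 with hHl_def
  set S : Matrix (Fin d) (Fin d) ℝ := hP.sqrt with hS_def
  -- basic positivity facts
  have hsm : (l • (1 : Matrix (Fin d) (Fin d) ℝ)).PosDef := by
    refine .of_dotProduct_mulVec_pos ?_ fun x hx => ?_
    · unfold Matrix.IsHermitian
      simp
    · rw [smul_mulVec, one_mulVec, dotProduct_smul, smul_eq_mul]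
      exact mul_pos hl (Matrix.dotProduct_star_self_pos_iff.mpr hx)
  have hHlpd : Hl.PosDef := Matrix.PosDef.posSemidef_add hH hsm
  have hSpsd : S.PosSemidef := hP.posSemidef_sqrt
  have hSS : S * S = Hl := hP.sqrt_mul_self
  have hSdet : IsUnit S.det := by
    have h1 : (0:ℝ) < S.det * S.det := by
      have := hHlpd.det_pos
      rwa [← hSS, det_mul] at this
    rcases eq_or_ne S.det 0 with h | h
    · rw [h] at h1; simp at h1
    · exact h.isUnit
  have hSinvS : S⁻¹ * S = 1 := Matrix.nonsing_inv_mul _ hSdet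
  have hSSinv : S * S⁻¹ = 1 := Matrix.mul_nonsing_inv _ hSdet
  have hSinvH : S⁻¹.IsHermitian := hSpsd.1.inv
  have hc2 : ∀ X : Matrix (Fin d) (Fin d) ℝ, S⁻¹ * (S * X) = X := fun X => by
    rw [← Matrix.mul_assoc, hSinvS, Matrix.one_mul]
  have hc1 : ∀ X : Matrix (Fin d) (Fin d) ℝ, S * (S⁻¹ * X) = X := fun X => by
    rw [← Matrix.mul_assoc, hSSinv, Matrix.one_mul]
  have hHlinv : Hl⁻¹ = S⁻¹ * S⁻¹ := by rw [← hSS, Matrix.mul_inv_rev]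
  -- conjugation by S⁻¹ preserves PSD
  have conjPSD : ∀ {X : Matrix (Fin d) (Fin d) ℝ}, X.PosSemidef →
      (S⁻¹ * X * S⁻¹).PosSemidef := fun hX => by
    have h := hX.mul_mul_conjTranspose_same S⁻¹
    rwa [hSinvH.eq] at h
  have hMpsd : (S⁻¹ * Hw * S⁻¹).PosSemidef := conjPSD hHw
  set A : Matrix (Fin d) (Fin d) ℝ := 1 - S⁻¹ * Hw * S⁻¹ with hA_def
  -- A = S⁻¹ (Hl - Hw) S⁻¹
  have hSHlS : S⁻¹ * Hl * S⁻¹ = 1 := by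
    rw [← hSS]
    simp only [Matrix.mul_assoc, hc2]
    exact hSSinv
  have hA_eq : A = S⁻¹ * (Hl - Hw) * S⁻¹ := by
    rw [hA_def, Matrix.mul_sub, Matrix.sub_mul, hSHlS]
  have hHlw : (Hl - Hw).PosDef := by
    have h : Hl - Hw = (H - Hw) + l • 1 := by rw [hHl_def]; abel
    rw [h]
    exact Matrix.PosDef.posSemidef_add hle hsm
  have hSinvdet : IsUnit S⁻¹.det := S.isUnit_nonsing_inv_det hSdet
  have hApd : A.PosDef := by
    rw [hA_eq]
    have h := posDef_conj (B := S⁻¹) hHlw hSinvdet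
    rwa [hSinvH.eq] at h
  have hAdet : IsUnit A.det := (isUnit_iff_isUnit_det A).mp hApd.isUnit
  have hAinvA : A⁻¹ * A = 1 := Matrix.nonsing_inv_mul _ hAdet
  have hAAinv : A * A⁻¹ = 1 := Matrix.mul_nonsing_inv _ hAdet
  have hAinvH : A⁻¹.IsHermitian := hApd.1.inv
  set P : Matrix (Fin d) (Fin d) ℝ := A⁻¹ with hP_def
  have hPAP : P * A * P = P := by rw [hAinvA, Matrix.one_mul]
  -- (Hl - Hw)⁻¹ = S⁻¹ P S⁻¹
  have hSAS : S * A * S = Hl - Hw := by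
    rw [hA_eq]
    simp only [Matrix.mul_assoc, hc1]
    rw [hSinvS, Matrix.mul_one]
  have hinv_eq : (Hl - Hw)⁻¹ = S⁻¹ * P * S⁻¹ := by
    rw [← hSAS, Matrix.mul_inv_rev, Matrix.mul_inv_rev, Matrix.mul_assoc]
  -- Lambda part
  have hLam : S * (Hl - Hw)⁻¹ * Hw * (Hl - Hw)⁻¹ * S = P * (S⁻¹ * Hw * S⁻¹) * P := by
    rw [hinv_eq]
    simp only [Matrix.mul_assoc, hc1, hc2, hSinvS, Matrix.mul_one]
  have hPMP : P * (S⁻¹ * Hw * S⁻¹) * P = P * P - P := by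
    have h1 : S⁻¹ * Hw * S⁻¹ = 1 - A := by rw [hA_def]; abel
    rw [h1, Matrix.mul_sub, Matrix.mul_one, Matrix.sub_mul, hPAP]
  -- scalar facts
  have hσnn : 0 ≤ σmax := by
    rw [hH.1.spectrum_real_eq_range_eigenvalues] at hσ_mem
    obtain ⟨i, hi⟩ := hσ_mem
    rw [← hi]
    exact hH.eigenvalues_nonneg i
  set c : ℝ := (σmax + l) / l with hc_def
  have hc0 : (0:ℝ) ≤ c := div_nonneg (by linarith) hl.le
  have hcl : c * l = σmax + l := by rw [hc_def]; field_simp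
  -- bound: c • A - 1 is PSD
  have hgap1 : (A - l • Hl⁻¹).PosSemidef := by
    have he : A - l • Hl⁻¹ = S⁻¹ * (H - Hw) * S⁻¹ := by
      have h : (Hl - Hw) - l • 1 = H - Hw := by rw [hHl_def]; abel
      rw [hA_eq, hHlinv, ← h]
      simp only [Matrix.mul_sub, Matrix.sub_mul, Matrix.mul_smul, Matrix.smul_mul,
        Matrix.mul_one]
    rw [he]; exact conjPSD hle
  have hub : (σmax • (1 : Matrix (Fin d) (Fin d) ℝ) - H).PosSemidef :=
    loewner_le hH.1 hσ_max
  have hgap2 : ((σmax + l) • Hl⁻¹ - 1).PosSemidef := by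
    have he : (σmax + l) • Hl⁻¹ - 1 = S⁻¹ * (σmax • 1 - H) * S⁻¹ := by
      have h2 : σmax • (1 : Matrix (Fin d) (Fin d) ℝ) - H = (σmax + l) • 1 - Hl := by
        rw [hHl_def, add_smul]; abel
      rw [h2, Matrix.mul_sub, Matrix.sub_mul, hSHlS, Matrix.mul_smul, Matrix.smul_mul,
        Matrix.mul_one, hHlinv]
    rw [he]; exact conjPSD hub
  have hgap : (c • A - 1).PosSemidef := by
    have he : c • A - 1 = c • (A - l • Hl⁻¹) + ((c * l) • Hl⁻¹ - 1) := by
      module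
    rw [he, hcl]
    exact (psd_smul hgap1 hc0).add hgap2
  -- sqrt of A
  have hRpsd := hApd.posSemidef.posSemidef_sqrt
  set R : Matrix (Fin d) (Fin d) ℝ := hApd.posSemidef.sqrt with hR_def
  have hRR : R * R = A := hApd.posSemidef.sqrt_mul_self
  have hRdet : IsUnit R.det := by
    have h1 : (0:ℝ) < R.det * R.det := by
      have := hApd.det_pos
      rwa [← hRR, det_mul] at this
    rcases eq_or_ne R.det 0 with h | h
    · rw [h] at h1; simp at h1
    · exact h.isUnit
  have hRinvH : R⁻¹.IsHermitian := hRpsd.1.inv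
  have conjR : ∀ {X : Matrix (Fin d) (Fin d) ℝ}, X.PosSemidef →
      (R⁻¹ * X * R⁻¹).PosSemidef := fun hX => by
    have h := hX.mul_mul_conjTranspose_same R⁻¹
    rwa [hRinvH.eq] at h
  have hRinvR : R⁻¹ * R = 1 := Matrix.nonsing_inv_mul _ hRdet
  have hRRinv : R * R⁻¹ = 1 := Matrix.mul_nonsing_inv _ hRdet
  have hRAR : R⁻¹ * A * R⁻¹ = 1 := by
    rw [← hRR]
    simp only [Matrix.mul_assoc]
    rw [hRRinv, Matrix.mul_one, hRinvR]
  have hR1R : R⁻¹ * 1 * R⁻¹ = P := by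
    rw [Matrix.mul_one, hP_def, ← hRR, Matrix.mul_inv_rev]
  -- P - 1 is PSD
  have hP1 : (P - 1).PosSemidef := by
    have hM' : ((1 : Matrix (Fin d) (Fin d) ℝ) - A).PosSemidef := by
      have h : (1 : Matrix (Fin d) (Fin d) ℝ) - A = S⁻¹ * Hw * S⁻¹ := by rw [hA_def]; abel
      rw [h]; exact hMpsd
    have hc := conjR hM'
    rwa [Matrix.mul_sub, Matrix.sub_mul, hR1R, hRAR] at hc
  -- c • 1 - P is PSD
  have hcP : (c • (1 : Matrix (Fin d) (Fin d) ℝ) - P).PosSemidef := by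
    have hc := conjR hgap
    rwa [Matrix.mul_sub, Matrix.sub_mul, Matrix.mul_smul, Matrix.smul_mul, hRAR, hR1R] at hc
  -- c • P - P * P is PSD
  have hcPP : (c • P - P * P).PosSemidef := by
    have hc := hgap.mul_mul_conjTranspose_same P
    rw [hAinvH.eq] at hc
    rwa [Matrix.mul_sub, Matrix.sub_mul, Matrix.mul_smul, Matrix.smul_mul, hPAP,
      Matrix.mul_one] at hc
  -- P*P - P is PSD
  have hPPP : (P * P - P).PosSemidef := by
    rw [← hPMP]
    have hc := hMpsd.mul_mul_conjTranspose_same P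
    rwa [hAinvH.eq] at hc
  -- rewrite the goal matrix
  rw [hLam, hPMP]
  have hBpsd : ((P - 1) + (1/2 : ℝ) • (P * P - P)).PosSemidef :=
    hP1.add (psd_smul hPPP (by norm_num))
  set c' : ℝ := 3 * σmax / (2 * l) + σmax ^ 2 / (2 * l ^ 2) with hc'_def
  have hc'eq : c' = (c + c ^ 2) / 2 - 1 := by
    rw [hc'_def, hc_def]
    field_simp
    ring
  have hCB : (c' • (1 : Matrix (Fin d) (Fin d) ℝ)
      - ((P - 1) + (1/2 : ℝ) • (P * P - P))).PosSemidef := by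
    rw [hc'eq]
    have he : ((c + c ^ 2) / 2 - 1) • (1 : Matrix (Fin d) (Fin d) ℝ)
        - ((P - 1) + (1/2 : ℝ) • (P * P - P))
        = (1/2 : ℝ) • (c • (1 : Matrix (Fin d) (Fin d) ℝ) - P)
          + (c/2 : ℝ) • (c • (1 : Matrix (Fin d) (Fin d) ℝ) - P)
          + (1/2 : ℝ) • (c • P - P * P) := by
      module
    rw [he]
    exact ((psd_smul hcP (by norm_num)).add (psd_smul hcP (by positivity))).add
      (psd_smul hcPP (by norm_num))
  constructor
  · have h := (conjPSD hBpsd).dotProduct_mulVec_nonneg g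
    rwa [star_trivial] at h
  · have h2 := (conjPSD hCB).dotProduct_mulVec_nonneg g
    have hexp : S⁻¹ * (c' • (1 : Matrix (Fin d) (Fin d) ℝ)
        - ((P - 1) + (1/2 : ℝ) • (P * P - P))) * S⁻¹
        = c' • Hl⁻¹ - S⁻¹ * ((P - 1) + (1/2 : ℝ) • (P * P - P)) * S⁻¹ := by
      rw [Matrix.mul_sub, Matrix.sub_mul, Matrix.mul_smul, Matrix.mul_one, Matrix.smul_mul,
        hHlinv]
    rw [hexp, Matrix.sub_mulVec, dotProduct_sub, smul_mulVec, dotProduct_smul,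
      smul_eq_mul] at h2
    rw [star_trivial] at h2
    linarith
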